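/- For every t > 0 and h > 0, the equation x = F(t·x + h), where F(u) = E[tanh(z·√u + u)] with z standard Gaussian, has a unique solution x = x̄(t,h) in (0,1). -/

import Mathlib

open MeasureTheory ProbabilityTheory Real Set Filter
open scoped ENNReal NNReal Topology

/-- `F(u) = E_z[tanh(z√u + u)]` with `z ~ N(0,1)`. -/
noncomputable def FNL (u : ℝ) : ℝ :=
  ∫ z, Real.tanh (z * Real.sqrt u + u) ∂(gaussianReal 0 1)

noncomputable def phiG (z : ℝ) : ℝ := gaussianPDFReal 0 1 z

lemma phiG_eq (z : ℝ) : phiG z = (√(2*π))⁻¹ * rexp (-z^2/2) := by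
  simp [phiG, gaussianPDFReal]

lemma phiG_pos (z : ℝ) : 0 < phiG z := gaussianPDFReal_pos 0 1 z one_ne_zero

lemma phiG_meas : Measurable phiG := measurable_gaussianPDFReal 0 1

lemma integral_gauss (f : ℝ → ℝ) :
    ∫ z, f z ∂(gaussianReal 0 1) = ∫ z, phiG z * f z := by
  rw [gaussianReal_of_var_ne_zero 0 one_ne_zero]
  have h1 : (gaussianPDF 0 1) = fun z => ((Real.toNNReal (gaussianPDFReal 0 1 z)) : ℝ≥0∞) := rfl
  rw [h1, integral_withDensity_eq_integral_smul ((measurable_gaussianPDFReal 0 1).real_toNNReal) f]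
  congr 1; ext z
  simp [NNReal.smul_def, Real.coe_toNNReal _ (gaussianPDFReal_nonneg 0 1 z), phiG]

lemma phiG_mul_exp (b z : ℝ) :
    phiG z * rexp (b*z) = rexp (b^2/2) * gaussianPDFReal b 1 z := by
  simp only [phiG_eq, gaussianPDFReal]
  push_cast
  rw [mul_one, mul_assoc, ← Real.exp_add, mul_comm (rexp (b^2/2)), mul_assoc, ← Real.exp_add]
  ring_nf

lemma integrable_phiG_exp (b : ℝ) : Integrable (fun z => phiG z * rexp (b*z)) := by
  simp only [phiG_mul_exp]
  exact (integrable_gaussianPDFReal b 1).const_mul _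

lemma integral_phiG_exp (b : ℝ) : ∫ z, phiG z * rexp (b*z) = rexp (b^2/2) := by
  simp only [phiG_mul_exp]
  rw [integral_const_mul, integral_gaussianPDFReal_eq_one b one_ne_zero, mul_one]

lemma abs_add_one_le (z : ℝ) : |z| + 1 ≤ rexp z + rexp (-z) := by
  have h1 := Real.add_one_le_exp |z|
  have h2 : rexp |z| ≤ rexp z + rexp (-z) := by
    rcases abs_cases z with ⟨h,_⟩|⟨h,_⟩ <;> rw [h] <;>
      nlinarith [Real.exp_pos z, Real.exp_pos (-z)]
  linarith

lemma cosh_add_one_le (y : ℝ) : Real.cosh y + 1 ≤ rexp y + rexp (-y) + 1 := by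
  rw [Real.cosh_eq]; nlinarith [Real.exp_pos y, Real.exp_pos (-y)]

lemma integrable_phiG_dom (c : ℝ) :
    Integrable (fun z => phiG z * ((|z|+1) * (Real.cosh (c*z) + 1))) := by
  have hB : Integrable (fun z => phiG z *
      ((rexp z + rexp (-z)) * (rexp (c*z) + rexp (-(c*z)) + 1))) := by
    have hE : (fun z => phiG z *
        ((rexp z + rexp (-z)) * (rexp (c*z) + rexp (-(c*z)) + 1)))
        = fun z => phiG z * rexp ((1+c)*z) + phiG z * rexp ((1-c)*z)
          + phiG z * rexp ((-1+c)*z) + phiG z * rexp ((-1-c)*z)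
          + phiG z * rexp (1*z) + phiG z * rexp ((-1)*z) := by
      ext z
      simp only [mul_add, add_mul, ← Real.exp_add]
      ring_nf
    rw [hE]
    exact (((((integrable_phiG_exp _).add (integrable_phiG_exp _)).add
      (integrable_phiG_exp _)).add (integrable_phiG_exp _)).add
      (integrable_phiG_exp _)).add (integrable_phiG_exp _)
  refine hB.mono ((phiG_meas.mul ?_).aestronglyMeasurable) (ae_of_all _ fun z => ?_)
  · exact ((measurable_abs.add_const 1).mul
      ((Real.continuous_cosh.measurable.comp (measurable_const_mul c)).add_const 1))
  · have h0 : 0 ≤ (|z|+1) * (Real.cosh (c*z) + 1) := by positivity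
    have hle : (|z|+1) * (Real.cosh (c*z) + 1) ≤
        (rexp z + rexp (-z)) * (rexp (c*z) + rexp (-(c*z)) + 1) := by
      have := mul_le_mul (abs_add_one_le z) (cosh_add_one_le (c*z)) (by positivity) (by positivity)
      linarith
    have hp := (phiG_pos z).le
    have e1 : ‖phiG z * ((|z|+1) * (Real.cosh (c*z) + 1))‖
        = phiG z * ((|z|+1) * (Real.cosh (c*z) + 1)) := abs_of_nonneg (mul_nonneg hp h0)
    have e2 : ‖phiG z * ((rexp z + rexp (-z)) * (rexp (c*z) + rexp (-(c*z)) + 1))‖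
        = phiG z * ((rexp z + rexp (-z)) * (rexp (c*z) + rexp (-(c*z)) + 1)) :=
      abs_of_nonneg (mul_nonneg hp (by positivity))
    rw [e1, e2]
    exact mul_le_mul_of_nonneg_left hle hp

lemma integrable_phiG_of_le {f : ℝ → ℝ} (c : ℝ) (hm : AEStronglyMeasurable f volume)
    (hb : ∀ z, |f z| ≤ (|z|+1) * (Real.cosh (c*z) + 1)) :
    Integrable (fun z => phiG z * f z) := by
  refine (integrable_phiG_dom c).mono (phiG_meas.aestronglyMeasurable.mul hm)
    (ae_of_all _ fun z => ?_)
  have hp := (phiG_pos z).le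
  have e2 : ‖phiG z * ((|z|+1) * (Real.cosh (c*z) + 1))‖
      = phiG z * ((|z|+1) * (Real.cosh (c*z) + 1)) :=
    abs_of_nonneg (mul_nonneg hp (by positivity))
  rw [Real.norm_eq_abs, abs_mul, abs_of_nonneg hp, e2]
  exact mul_le_mul_of_nonneg_left (hb z) hp


noncomputable def gg (y : ℝ) : ℝ := Real.cosh y - (Real.cosh y)⁻¹
noncomputable def dgg (y : ℝ) : ℝ := Real.sinh y + Real.sinh y * ((Real.cosh y)⁻¹)^2
noncomputable def sch3 (y : ℝ) : ℝ := ((Real.cosh y)⁻¹)^3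

lemma cosh_ne (y : ℝ) : Real.cosh y ≠ 0 := (Real.cosh_pos (x := y)).ne'

lemma gg_nonneg (y : ℝ) : 0 ≤ gg y := by
  have h1 := Real.one_le_cosh y
  have h2 : (Real.cosh y)⁻¹ ≤ 1 := inv_le_one_of_one_le₀ h1
  simp only [gg]; linarith

lemma gg_pos {y : ℝ} (hy : y ≠ 0) : 0 < gg y := by
  have h1 : 1 < Real.cosh y := by
    rw [← Real.cosh_zero]
    exact Real.cosh_lt_cosh.2 (by simpa using abs_pos.2 hy)
  have h2 : (Real.cosh y)⁻¹ ≤ 1 := inv_le_one_of_one_le₀ h1.le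
  simp only [gg]; linarith

lemma gg_le (y : ℝ) : gg y ≤ Real.cosh y := by
  have h2 : 0 < (Real.cosh y)⁻¹ := by positivity
  simp only [gg]; linarith

lemma abs_sinh_le (y : ℝ) : |Real.sinh y| ≤ Real.cosh y := by
  rw [Real.abs_sinh, ← Real.cosh_abs]
  have := Real.exp_pos (-|y|)
  rw [Real.sinh_eq, Real.cosh_eq]; linarith

lemma cosh_mul_inv_sq (y : ℝ) : Real.cosh y * ((Real.cosh y)⁻¹)^2 = (Real.cosh y)⁻¹ := by
  have hc := cosh_ne y
  field_simp [pow_two]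

lemma dgg_abs_le (y : ℝ) : |dgg y| ≤ Real.cosh y + 1 := by
  have h1 := abs_sinh_le y
  have hc := Real.one_le_cosh y
  have hinv : (Real.cosh y)⁻¹ ≤ 1 := inv_le_one_of_one_le₀ hc
  have h2 : |Real.sinh y * ((Real.cosh y)⁻¹)^2| ≤ 1 := by
    rw [abs_mul, abs_of_nonneg (by positivity : (0:ℝ) ≤ ((Real.cosh y)⁻¹)^2)]
    calc |Real.sinh y| * ((Real.cosh y)⁻¹)^2 ≤ Real.cosh y * ((Real.cosh y)⁻¹)^2 :=
          mul_le_mul_of_nonneg_right h1 (by positivity)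
      _ = (Real.cosh y)⁻¹ := cosh_mul_inv_sq y
      _ ≤ 1 := hinv
  calc |dgg y| ≤ |Real.sinh y| + |Real.sinh y * ((Real.cosh y)⁻¹)^2| := abs_add_le _ _
    _ ≤ Real.cosh y + 1 := by linarith

lemma sch3_pos (y : ℝ) : 0 < sch3 y := by
  simp only [sch3]; positivity

lemma sch3_le_one (y : ℝ) : sch3 y ≤ 1 := by
  have := Real.one_le_cosh y
  simp only [sch3]
  calc ((Real.cosh y)⁻¹)^3 ≤ 1^3 :=
        pow_le_pow_left₀ (by positivity) (inv_le_one_of_one_le₀ this) 3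
    _ = 1 := one_pow 3

lemma sch3_anti {y y' : ℝ} (h : |y| ≤ |y'|) : sch3 y' ≤ sch3 y := by
  have h1 : Real.cosh y ≤ Real.cosh y' := Real.cosh_le_cosh.2 h
  have h2 : 0 < Real.cosh y := Real.cosh_pos (x := y)
  simp only [sch3]
  exact pow_le_pow_left₀ (by positivity) (inv_anti₀ h2 h1) 3

lemma hasDerivAt_gg (y : ℝ) : HasDerivAt gg (dgg y) y := by
  have h1 : HasDerivAt Real.cosh (Real.sinh y) y := Real.hasDerivAt_cosh y
  have h2 : HasDerivAt (fun y => (Real.cosh y)⁻¹)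
      (-(Real.sinh y) / (Real.cosh y)^2) y := h1.inv (cosh_ne y)
  have := h1.sub h2
  refine this.congr_deriv (Eq.symm ?_)
  have hc := cosh_ne y
  simp only [dgg]
  field_simp
  ring

lemma hasDerivAt_dgg (y : ℝ) : HasDerivAt dgg (gg y + 2 * sch3 y) y := by
  have h1 : HasDerivAt Real.sinh (Real.cosh y) y := Real.hasDerivAt_sinh y
  have h2 : HasDerivAt (fun y => (Real.cosh y)⁻¹)
      (-(Real.sinh y) / (Real.cosh y)^2) y := (Real.hasDerivAt_cosh y).inv (cosh_ne y)
  have h3 : HasDerivAt (fun y => ((Real.cosh y)⁻¹)^2)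
      (2 * ((Real.cosh y)⁻¹)^1 * (-(Real.sinh y) / (Real.cosh y)^2)) y := by
    simpa using h2.fun_pow 2
  have h4 := h1.mul h3
  have h5 := h1.add h4
  refine h5.congr_deriv (Eq.symm ?_)
  have hc := cosh_ne y
  have hs : Real.sinh y ^ 2 = Real.cosh y ^ 2 - 1 := Real.sinh_sq y
  simp only [gg, sch3, pow_one]
  field_simp
  linear_combination 2 * hs

lemma continuous_gg : Continuous gg :=
  Real.continuous_cosh.sub (Real.continuous_cosh.inv₀ cosh_ne)

lemma continuous_dgg : Continuous dgg :=
  Real.continuous_sinh.add (Real.continuous_sinh.mul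
    (((Real.continuous_cosh.inv₀ cosh_ne)).pow 2))

lemma continuous_sch3 : Continuous sch3 := (Real.continuous_cosh.inv₀ cosh_ne).pow 3

lemma int_gg (c : ℝ) : Integrable (fun z => phiG z * gg (c*z)) := by
  refine integrable_phiG_of_le c
    ((continuous_gg.comp (continuous_mul_left c)).aestronglyMeasurable) (fun z => ?_)
  have h1 : |gg (c*z)| = gg (c*z) := abs_of_nonneg (gg_nonneg _)
  have h2 := gg_le (c*z)
  have h3 : (0:ℝ) ≤ Real.cosh (c*z) := (Real.cosh_pos (x := c*z)).le
  have h4 : (0:ℝ) ≤ |z| := abs_nonneg z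
  rw [h1]; nlinarith

lemma int_sch3 (c : ℝ) : Integrable (fun z => phiG z * sch3 (c*z)) := by
  refine integrable_phiG_of_le c
    ((continuous_sch3.comp (continuous_mul_left c)).aestronglyMeasurable) (fun z => ?_)
  have h1 : |sch3 (c*z)| = sch3 (c*z) := abs_of_nonneg (sch3_pos _).le
  have h2 := sch3_le_one (c*z)
  have h3 : (0:ℝ) < Real.cosh (c*z) := Real.cosh_pos (x := c*z)
  have h4 : (0:ℝ) ≤ |z| := abs_nonneg z
  rw [h1]; nlinarith

lemma int_sinh (c : ℝ) : Integrable (fun z => phiG z * Real.sinh (c*z)) := by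
  refine integrable_phiG_of_le c
    ((Real.continuous_sinh.comp (continuous_mul_left c)).aestronglyMeasurable) (fun z => ?_)
  have h2 := abs_sinh_le (c*z)
  have h3 : (0:ℝ) < Real.cosh (c*z) := Real.cosh_pos (x := c*z)
  have h4 : (0:ℝ) ≤ |z| := abs_nonneg z
  nlinarith

lemma int_zdgg (c : ℝ) : Integrable (fun z => phiG z * (z * dgg (c*z))) := by
  refine integrable_phiG_of_le c
    (((continuous_id.mul (continuous_dgg.comp
      (continuous_mul_left c)))).aestronglyMeasurable) (fun z => ?_)
  have h2 := dgg_abs_le (c*z)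
  have h3 : (0:ℝ) < Real.cosh (c*z) := Real.cosh_pos (x := c*z)
  have h4 : (0:ℝ) ≤ |z| := abs_nonneg z
  rw [abs_mul]
  have h5 : |z| * |dgg (c*z)| ≤ |z| * (Real.cosh (c*z) + 1) :=
    mul_le_mul_of_nonneg_left h2 h4
  nlinarith

lemma integral_sinh_zero (c : ℝ) : ∫ z, phiG z * Real.sinh (c*z) = 0 := by
  have hE : (fun z => phiG z * Real.sinh (c*z))
      = fun z => (phiG z * rexp (c*z) - phiG z * rexp ((-c)*z)) / 2 := by
    ext z
    rw [Real.sinh_eq]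
    have : (-c) * z = -(c*z) := by ring
    rw [this]; ring
  rw [hE]
  rw [integral_div]
  rw [integral_sub (integrable_phiG_exp c) (integrable_phiG_exp (-c))]
  rw [integral_phiG_exp, integral_phiG_exp, neg_sq, sub_self, zero_div]

lemma exp_mul_tanh (y : ℝ) : rexp y * Real.tanh y = Real.sinh y + gg y := by
  rw [Real.tanh_eq_sinh_div_cosh, ← Real.cosh_add_sinh y]
  have hc := cosh_ne y
  have hs : Real.sinh y ^ 2 = Real.cosh y ^ 2 - 1 := Real.sinh_sq y
  simp only [gg]
  field_simp
  linear_combination hs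

noncomputable def GG (u : ℝ) : ℝ := ∫ z, phiG z * gg (Real.sqrt u * z)
noncomputable def SS (u : ℝ) : ℝ := ∫ z, phiG z * sch3 (Real.sqrt u * z)
noncomputable def DD (u : ℝ) : ℝ := rexp (-u/2) * SS u
noncomputable def Fb (u : ℝ) : ℝ := rexp (-u/2) * GG u

lemma phiG_shift (c z : ℝ) : phiG z * rexp (c*z) = rexp (c^2/2) * phiG (z - c) := by
  rw [phiG_mul_exp]
  congr 1
  rw [phiG, gaussianPDFReal_sub, zero_add]

lemma FNL_eq_Fb {u : ℝ} (hu : 0 < u) : FNL u = Fb u := by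
  set c := Real.sqrt u with hc
  have hc0 : 0 < c := Real.sqrt_pos.2 hu
  have hcc : c * c = u := Real.mul_self_sqrt hu.le
  have h3 : ∀ z, phiG (z - c) * Real.tanh ((z - c) * c + u)
      = rexp (-u/2) * (phiG z * Real.sinh (c*z) + phiG z * gg (c*z)) := by
    intro z
    have harg : (z - c) * c + u = c * z := by rw [← hcc]; ring
    have hexp : rexp (-u/2) * rexp (c^2/2) = 1 := by
      rw [← Real.exp_add]
      have : -u/2 + c^2/2 = 0 := by rw [← hcc]; ring
      rw [this, Real.exp_zero]
    calc phiG (z - c) * Real.tanh ((z - c) * c + u)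
        = phiG (z - c) * Real.tanh (c * z) := by rw [harg]
      _ = rexp (-u/2) * (rexp (c^2/2) * phiG (z - c)) * Real.tanh (c*z) := by
          rw [← mul_assoc, hexp, one_mul]
      _ = rexp (-u/2) * (phiG z * (rexp (c*z) * Real.tanh (c*z))) := by
          rw [← phiG_shift]; ring
      _ = rexp (-u/2) * (phiG z * Real.sinh (c*z) + phiG z * gg (c*z)) := by
          rw [exp_mul_tanh]; ring
  calc FNL u = ∫ z, phiG z * Real.tanh (z * c + u) := integral_gauss _
    _ = ∫ z, phiG (z - c) * Real.tanh ((z - c) * c + u) :=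
        (integral_sub_right_eq_self (fun z => phiG z * Real.tanh (z * c + u)) c).symm
    _ = ∫ z, rexp (-u/2) * (phiG z * Real.sinh (c*z) + phiG z * gg (c*z)) := by
        exact integral_congr_ae (ae_of_all _ h3)
    _ = rexp (-u/2) * ((∫ z, phiG z * Real.sinh (c*z)) + ∫ z, phiG z * gg (c*z)) := by
        rw [MeasureTheory.integral_const_mul, integral_add (int_sinh c) (int_gg c)]
    _ = Fb u := by rw [integral_sinh_zero c, zero_add]; rfl

lemma support_pos_of_subset {f : ℝ → ℝ} (h : ∀ z : ℝ, 0 < z → f z ≠ 0) :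
    0 < volume (Function.support f) := by
  have hsub : Ioi (0:ℝ) ⊆ Function.support f := fun z hz => h z hz
  have : volume (Ioi (0:ℝ)) ≤ volume (Function.support f) := measure_mono hsub
  rw [Real.volume_Ioi] at this
  exact lt_of_lt_of_le (by norm_num) this

lemma SS_pos (u : ℝ) : 0 < SS u := by
  rw [SS, integral_pos_iff_support_of_nonneg]
  · exact support_pos_of_subset fun z _ => (mul_pos (phiG_pos z) (sch3_pos _)).ne'
  · exact fun z => (mul_pos (phiG_pos z) (sch3_pos _)).le
  · exact int_sch3 _

lemma GG_nonneg (u : ℝ) : 0 ≤ GG u :=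
  integral_nonneg fun z => mul_nonneg (phiG_pos z).le (gg_nonneg _)

lemma GG_pos {u : ℝ} (hu : 0 < u) : 0 < GG u := by
  have hc : 0 < Real.sqrt u := Real.sqrt_pos.2 hu
  rw [GG, integral_pos_iff_support_of_nonneg]
  · refine support_pos_of_subset fun z hz => ?_
    exact (mul_pos (phiG_pos z) (gg_pos (by positivity : Real.sqrt u * z ≠ 0))).ne'
  · exact fun z => mul_nonneg (phiG_pos z).le (gg_nonneg _)
  · exact int_gg _

lemma Fb_pos {u : ℝ} (hu : 0 < u) : 0 < Fb u := mul_pos (Real.exp_pos _) (GG_pos hu)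

lemma Fb_nonneg (u : ℝ) : 0 ≤ Fb u := mul_nonneg (Real.exp_pos _).le (GG_nonneg u)

lemma SS_anti {a b : ℝ} (hab : a ≤ b) : SS b ≤ SS a := by
  have hs : Real.sqrt a ≤ Real.sqrt b := Real.sqrt_le_sqrt hab
  refine integral_mono (int_sch3 _) (int_sch3 _) fun z => ?_
  refine mul_le_mul_of_nonneg_left (sch3_anti ?_) (phiG_pos z).le
  rw [abs_mul, abs_mul]
  have h0 : 0 ≤ Real.sqrt a := Real.sqrt_nonneg a
  rw [abs_of_nonneg h0, abs_of_nonneg (Real.sqrt_nonneg b)]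
  exact mul_le_mul_of_nonneg_right hs (abs_nonneg z)

lemma DD_pos (u : ℝ) : 0 < DD u := mul_pos (Real.exp_pos _) (SS_pos u)

lemma DD_anti {a b : ℝ} (hab : a ≤ b) : DD b ≤ DD a := by
  refine mul_le_mul (Real.exp_le_exp.2 (by linarith)) (SS_anti hab) (SS_pos b).le
    (Real.exp_pos _).le

lemma tendsto_phiG_atTop : Tendsto phiG atTop (𝓝 0) := by
  have h1 : Tendsto (fun z : ℝ => z^2/2) atTop atTop :=
    (tendsto_pow_atTop two_ne_zero).atTop_div_const (by norm_num)
  have h2 : Tendsto (fun z : ℝ => rexp (-(z^2/2))) atTop (𝓝 0) :=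
    Real.tendsto_exp_neg_atTop_nhds_zero.comp h1
  have h3 : Tendsto (fun z : ℝ => (√(2*π))⁻¹ * rexp (-(z^2/2))) atTop (𝓝 ((√(2*π))⁻¹ * 0)) :=
    h2.const_mul _
  rw [mul_zero] at h3
  refine h3.congr fun z => ?_
  rw [phiG_eq, neg_div]

lemma tendsto_phiG_exp_atTop (b : ℝ) :
    Tendsto (fun z => phiG z * rexp (b*z)) atTop (𝓝 0) := by
  have h1 : Tendsto (fun z : ℝ => phiG (z - b)) atTop (𝓝 0) :=
    tendsto_phiG_atTop.comp (tendsto_atTop_add_const_right _ (-b) tendsto_id)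
  have h2 := h1.const_mul (rexp (b^2/2))
  rw [mul_zero] at h2
  refine h2.congr fun z => ?_
  rw [← phiG_shift]

lemma phiG_even (z : ℝ) : phiG (-z) = phiG z := by
  rw [phiG_eq, phiG_eq, neg_pow]
  norm_num

lemma tendsto_phiG_exp_atBot (b : ℝ) :
    Tendsto (fun z => phiG z * rexp (b*z)) atBot (𝓝 0) := by
  have h1 := (tendsto_phiG_exp_atTop (-b)).comp tendsto_neg_atBot_atTop
  refine h1.congr fun z => ?_
  simp only [Function.comp]
  rw [phiG_even]
  ring_nf

lemma tendsto_phiG_cosh (c : ℝ) (l : Filter ℝ) (hl : l = atTop ∨ l = atBot) :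
    Tendsto (fun z => phiG z * (Real.cosh (c*z) + 1)) l (𝓝 0) := by
  have hE : (fun z => phiG z * (Real.cosh (c*z) + 1))
      = fun z => (phiG z * rexp (c*z)) / 2 + (phiG z * rexp ((-c)*z)) / 2
        + phiG z * rexp (0*z) := by
    ext z
    rw [Real.cosh_eq]
    have : (-c) * z = -(c*z) := by ring
    rw [this, zero_mul, Real.exp_zero]
    ring
  rw [hE]
  rcases hl with rfl | rfl
  · have := (((tendsto_phiG_exp_atTop c).div_const 2).add
      ((tendsto_phiG_exp_atTop (-c)).div_const 2)).add (tendsto_phiG_exp_atTop 0)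
    simpa using this
  · have := (((tendsto_phiG_exp_atBot c).div_const 2).add
      ((tendsto_phiG_exp_atBot (-c)).div_const 2)).add (tendsto_phiG_exp_atBot 0)
    simpa using this

lemma hasDerivAt_phiG (z : ℝ) : HasDerivAt phiG (-z * phiG z) z := by
  have h1 : HasDerivAt (fun z : ℝ => -(z^2/2)) (-z) z := by
    have := ((hasDerivAt_pow 2 z).div_const 2).neg
    refine this.congr_deriv (Eq.symm ?_)
    ring
  have h2 := (h1.exp).const_mul ((√(2*π))⁻¹)
  have hE : (fun z : ℝ => (√(2*π))⁻¹ * rexp (-(z^2/2))) = phiG := by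
    ext z; rw [phiG_eq, neg_div]
  rw [hE] at h2
  refine h2.congr_deriv (Eq.symm ?_)
  rw [phiG_eq, neg_div]
  ring

lemma int_ggsch (c : ℝ) :
    Integrable (fun z => phiG z * (gg (c*z) + 2 * sch3 (c*z))) := by
  have h : Integrable (fun z => phiG z * gg (c*z) + 2 * (phiG z * sch3 (c*z))) :=
    (int_gg c).add ((int_sch3 c).const_mul 2)
  exact h.congr (ae_of_all _ fun z => by ring)

lemma gauss_ibp (c : ℝ) :
    ∫ z, phiG z * (z * dgg (c*z))
      = c * ∫ z, phiG z * (gg (c*z) + 2 * sch3 (c*z)) := by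
  set W : ℝ → ℝ := fun z => -(phiG z * dgg (c*z)) with hW
  set W' : ℝ → ℝ := fun z =>
    phiG z * (z * dgg (c*z)) - c * (phiG z * (gg (c*z) + 2 * sch3 (c*z))) with hW'
  have hderiv : ∀ z, HasDerivAt W (W' z) z := by
    intro z
    have h0 : HasDerivAt (fun z : ℝ => c * z) c z := by
      simpa using (hasDerivAt_id z).const_mul c
    have h1 : HasDerivAt (fun z : ℝ => dgg (c*z))
        ((gg (c*z) + 2 * sch3 (c*z)) * c) z :=
      (hasDerivAt_dgg (c*z)).comp z h0
    have h2 := ((hasDerivAt_phiG z).mul h1).neg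
    refine h2.congr_deriv (Eq.symm ?_)
    simp only [hW']
    ring
  have hint : Integrable W' :=
    (int_zdgg c).sub ((int_ggsch c).const_mul c)
  have habs : ∀ z, ‖W z‖ ≤ phiG z * (Real.cosh (c*z) + 1) := by
    intro z
    rw [hW]
    rw [norm_neg, Real.norm_eq_abs, abs_mul, abs_of_nonneg (phiG_pos z).le]
    exact mul_le_mul_of_nonneg_left (dgg_abs_le (c*z)) (phiG_pos z).le
  have htop : Tendsto W atTop (𝓝 0) :=
    squeeze_zero_norm habs (tendsto_phiG_cosh c atTop (Or.inl rfl))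
  have hbot : Tendsto W atBot (𝓝 0) :=
    squeeze_zero_norm habs (tendsto_phiG_cosh c atBot (Or.inr rfl))
  have hIoi : ∫ z in Ioi (0:ℝ), W' z = 0 - W 0 :=
    integral_Ioi_of_hasDerivAt_of_tendsto' (fun x _ => hderiv x)
      hint.integrableOn htop
  have hIic : ∫ z in Iic (0:ℝ), W' z = W 0 - 0 :=
    integral_Iic_of_hasDerivAt_of_tendsto' (fun x _ => hderiv x)
      hint.integrableOn hbot
  have hsplit : ∫ z, W' z = (∫ z in Iic (0:ℝ), W' z) + ∫ z in Ioi (0:ℝ), W' z :=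
    (intervalIntegral.integral_Iic_add_Ioi hint.integrableOn hint.integrableOn).symm
  have hzero : ∫ z, W' z = 0 := by rw [hsplit, hIoi, hIic]; ring
  have := integral_sub (int_zdgg c) ((int_ggsch c).const_mul c)
  rw [hW'] at hzero
  rw [this] at hzero
  rw [MeasureTheory.integral_const_mul] at hzero
  linarith [hzero]

lemma hasDerivAt_GG {u : ℝ} (hu : 0 < u) :
    HasDerivAt GG (GG u / 2 + SS u) u := by
  set c := Real.sqrt u with hcdef
  have hc0 : 0 < c := Real.sqrt_pos.2 hu
  set c₁ := Real.sqrt (2*u) with hc1def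
  have hc10 : 0 < c₁ := Real.sqrt_pos.2 (by linarith)
  have key : HasDerivAt (fun v => ∫ z, phiG z * gg (Real.sqrt v * z))
      (∫ z, phiG z * (z * dgg (Real.sqrt u * z) / (2 * Real.sqrt u))) u := by
    have hball : ∀ v ∈ Metric.ball u (u/2), u/2 < v ∧ v < 3*u/2 := by
      intro v hv
      rw [Metric.mem_ball, Real.dist_eq, abs_lt] at hv
      constructor <;> linarith [hv.1, hv.2]
    refine (hasDerivAt_integral_of_dominated_loc_of_deriv_le (s := Metric.ball u (u/2))
      (F' := fun v z => phiG z * (z * dgg (Real.sqrt v * z) / (2 * Real.sqrt v)))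
      (bound := fun z => phiG z * ((c₁)⁻¹ * ((|z|+1) * (Real.cosh (c₁*z) + 1))))
      (Metric.ball_mem_nhds u (by linarith)) ?_ ?_ ?_ ?_ ?_ ?_).2
    · exact Eventually.of_forall fun v =>
        (phiG_meas.aestronglyMeasurable.mul
          ((continuous_gg.comp (continuous_mul_left _)).aestronglyMeasurable))
    · exact int_gg c
    · exact (phiG_meas.aestronglyMeasurable.mul
        (((continuous_id.mul (continuous_dgg.comp (continuous_mul_left _))).div_const
          _).aestronglyMeasurable))
    · refine ae_of_all _ fun z v hv => ?_
      obtain ⟨h1, h2⟩ := hball v hv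
      have hv0 : 0 < v := by linarith
      have hsv : 0 < Real.sqrt v := Real.sqrt_pos.2 hv0
      have hsvle : Real.sqrt v ≤ c₁ := Real.sqrt_le_sqrt (by linarith)
      have hinv : (2 * Real.sqrt v)⁻¹ ≤ (c₁)⁻¹ := by
        apply inv_anti₀ hc10
        have h4 : Real.sqrt (2*u) ≤ 2 * Real.sqrt v := by
          rw [show (2:ℝ) * Real.sqrt v = Real.sqrt 4 * Real.sqrt v by
            rw [show (4:ℝ) = 2^2 by norm_num, Real.sqrt_sq (by norm_num : (0:ℝ) ≤ 2)]]
          rw [← Real.sqrt_mul (by norm_num : (0:ℝ) ≤ 4)]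
          exact Real.sqrt_le_sqrt (by linarith)
        exact h4
      have hcosh : Real.cosh (Real.sqrt v * z) ≤ Real.cosh (c₁ * z) := by
        apply Real.cosh_le_cosh.2
        rw [abs_mul, abs_mul, abs_of_nonneg hsv.le, abs_of_nonneg hc10.le]
        exact mul_le_mul_of_nonneg_right hsvle (abs_nonneg z)
      have hdgg := dgg_abs_le (Real.sqrt v * z)
      rw [Real.norm_eq_abs, abs_mul, abs_of_nonneg (phiG_pos z).le]
      refine mul_le_mul_of_nonneg_left ?_ (phiG_pos z).le
      rw [abs_div, abs_mul]
      rw [abs_of_nonneg (by positivity : (0:ℝ) ≤ 2 * Real.sqrt v)]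
      rw [div_eq_mul_inv]
      have hb1 : |z| * |dgg (Real.sqrt v * z)| ≤ (|z|+1) * (Real.cosh (c₁*z) + 1) := by
        have := mul_le_mul_of_nonneg_left hdgg (abs_nonneg z)
        have hch : 0 < Real.cosh (Real.sqrt v * z) := Real.cosh_pos (x := _)
        nlinarith [abs_nonneg z, Real.cosh_pos (x := c₁ * z)]
      calc |z| * |dgg (Real.sqrt v * z)| * (2 * Real.sqrt v)⁻¹
          ≤ ((|z|+1) * (Real.cosh (c₁*z) + 1)) * (c₁)⁻¹ := by
            apply mul_le_mul hb1 hinv (by positivity) (by positivity)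
        _ = (c₁)⁻¹ * ((|z|+1) * (Real.cosh (c₁*z) + 1)) := by ring
    · have : Integrable (fun z => (c₁)⁻¹ *
          (phiG z * ((|z|+1) * (Real.cosh (c₁*z) + 1)))) :=
        (integrable_phiG_dom c₁).const_mul _
      exact this.congr (ae_of_all _ fun z => by ring)
    · refine ae_of_all _ fun z v hv => ?_
      obtain ⟨h1, _⟩ := hball v hv
      have hv0 : 0 < v := by linarith
      have hs : HasDerivAt Real.sqrt (1 / (2 * Real.sqrt v)) v :=
        Real.hasDerivAt_sqrt hv0.ne'
      have hsz : HasDerivAt (fun v => Real.sqrt v * z) (1 / (2 * Real.sqrt v) * z) v :=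
        hs.mul_const z
      have hg : HasDerivAt (fun v => gg (Real.sqrt v * z))
          (dgg (Real.sqrt v * z) * (1 / (2 * Real.sqrt v) * z)) v :=
        (hasDerivAt_gg _).comp v hsz
      have := hg.const_mul (phiG z)
      refine this.congr_deriv (Eq.symm ?_)
      ring
  have hval : (∫ z, phiG z * (z * dgg (Real.sqrt u * z) / (2 * Real.sqrt u)))
      = GG u / 2 + SS u := by
    have hE : (fun z => phiG z * (z * dgg (c * z) / (2 * c)))
        = fun z => (phiG z * (z * dgg (c * z))) * (2*c)⁻¹ := by
      ext z; field_simp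
    rw [← hcdef, hE, MeasureTheory.integral_mul_const, gauss_ibp c]
    have hsplit : (∫ z, phiG z * (gg (c*z) + 2 * sch3 (c*z)))
        = (∫ z, phiG z * gg (c*z)) + 2 * ∫ z, phiG z * sch3 (c*z) := by
      rw [show (fun z => phiG z * (gg (c*z) + 2 * sch3 (c*z)))
          = fun z => phiG z * gg (c*z) + 2 * (phiG z * sch3 (c*z)) from funext fun z => by ring]
      rw [integral_add (int_gg c) ((int_sch3 c).const_mul 2), MeasureTheory.integral_const_mul]
    rw [hsplit, GG, SS, ← hcdef]
    field_simp
  rw [hval] at key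
  exact key

lemma hasDerivAt_Fb {u : ℝ} (hu : 0 < u) : HasDerivAt Fb (DD u) u := by
  have h1 := hasDerivAt_GG hu
  have h2 : HasDerivAt (fun u : ℝ => rexp (-u/2)) (rexp (-u/2) * (-1/2)) u := by
    have h3 : HasDerivAt (fun u : ℝ => -u/2) (-1/2 : ℝ) u := by
      simpa using ((hasDerivAt_id u).neg.div_const 2)
    exact h3.exp
  have := h2.mul h1
  refine this.congr_deriv (Eq.symm ?_)
  simp only [DD]
  ring

lemma tanh_lt_one' (y : ℝ) : Real.tanh y < 1 := by
  rw [Real.tanh_eq_sinh_div_cosh, div_lt_one (Real.cosh_pos (x := y))]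
  have h := Real.cosh_sub_sinh y
  linarith [Real.exp_pos (-y)]

lemma abs_tanh_le_one (y : ℝ) : |Real.tanh y| ≤ 1 := by
  rw [abs_le]
  constructor
  · have := tanh_lt_one' (-y)
    rw [Real.tanh_neg] at this
    linarith
  · exact (tanh_lt_one' y).le

lemma continuous_tanh' : Continuous Real.tanh := by
  have : Real.tanh = fun y => Real.sinh y / Real.cosh y := funext Real.tanh_eq_sinh_div_cosh
  rw [this]
  exact Real.continuous_sinh.div Real.continuous_cosh cosh_ne

lemma FNL_lt_one (u : ℝ) : FNL u < 1 := by
  have hint : Integrable (fun z => Real.tanh (z * Real.sqrt u + u)) (gaussianReal 0 1) := by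
    refine Integrable.mono' (integrable_const (1:ℝ))
      ((continuous_tanh'.comp ((continuous_mul_right _).add
        continuous_const)).aestronglyMeasurable) (ae_of_all _ fun z => ?_)
    exact abs_tanh_le_one _
  have h2 : 0 < ∫ z, (1 - Real.tanh (z * Real.sqrt u + u)) ∂(gaussianReal 0 1) := by
    rw [integral_pos_iff_support_of_nonneg]
    · have hs : Function.support (fun z => 1 - Real.tanh (z * Real.sqrt u + u)) = univ := by
        ext z
        simp only [Function.mem_support, mem_univ, iff_true, sub_ne_zero]
        exact (ne_of_lt (tanh_lt_one' _)).symm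
      rw [hs]
      simp [measure_univ]
    · exact fun z => by simpa using (tanh_lt_one' (z * Real.sqrt u + u)).le
    · exact (integrable_const 1).sub hint
  rw [integral_sub (integrable_const 1) hint, integral_const] at h2
  simp only [measure_univ, ENNReal.toReal_one, probReal_univ, smul_eq_mul, one_mul] at h2
  have : FNL u = ∫ z, Real.tanh (z * Real.sqrt u + u) ∂(gaussianReal 0 1) := rfl
  linarith

lemma Fb_sub {a b : ℝ} (ha : 0 < a) (hab : a ≤ b) : Fb b - Fb a = ∫ x in a..b, DD x := by
  have hI : IntervalIntegrable DD volume a b :=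
    AntitoneOn.intervalIntegrable (fun x _ y _ hxy => DD_anti hxy)
  exact (intervalIntegral.integral_eq_sub_of_hasDerivAt
    (fun x hx => hasDerivAt_Fb (lt_of_lt_of_le ha
      (by rw [uIcc_of_le hab] at hx; exact hx.1))) hI).symm

lemma Fb_lower {a b : ℝ} (ha : 0 < a) (hab : a ≤ b) : Fb a + (b - a) * DD b ≤ Fb b := by
  have hI : IntervalIntegrable DD volume a b :=
    AntitoneOn.intervalIntegrable (fun x _ y _ hxy => DD_anti hxy)
  have h1 : ∫ x in a..b, DD b ≤ ∫ x in a..b, DD x :=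
    intervalIntegral.integral_mono_on hab intervalIntegrable_const hI
      (fun x hx => DD_anti hx.2)
  rw [intervalIntegral.integral_const, smul_eq_mul] at h1
  have h2 := Fb_sub ha hab
  linarith

lemma Fb_upper {a b : ℝ} (ha : 0 < a) (hab : a ≤ b) : Fb b ≤ Fb a + (b - a) * DD a := by
  have hI : IntervalIntegrable DD volume a b :=
    AntitoneOn.intervalIntegrable (fun x _ y _ hxy => DD_anti hxy)
  have h1 : ∫ x in a..b, DD x ≤ ∫ x in a..b, DD a :=
    intervalIntegral.integral_mono_on hab hI intervalIntegrable_const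
      (fun x hx => DD_anti hx.1)
  rw [intervalIntegral.integral_const, smul_eq_mul] at h1
  have h2 := Fb_sub ha hab
  linarith

lemma u_DD_le_Fb {u : ℝ} (hu : 0 < u) : u * DD u ≤ Fb u := by
  have key : ∀ ε, 0 < ε → ε < u → (u - ε) * DD u ≤ Fb u := by
    intro ε hε hεu
    have h1 := Fb_lower hε hεu.le
    linarith [Fb_nonneg ε]
  by_contra hlt
  push_neg at hlt
  have hD := DD_pos u
  set ε := (u * DD u - Fb u) / (2 * DD u) with hε
  have hε0 : 0 < ε := by
    apply div_pos (by linarith) (by linarith)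
  have hεD : ε * DD u = (u * DD u - Fb u) / 2 := by
    rw [hε]; field_simp
  have hεu : ε < u := by
    have hF := Fb_pos hu
    rw [hε, div_lt_iff₀ (by linarith : (0:ℝ) < 2 * DD u)]
    nlinarith
  have := key ε hε0 hεu
  nlinarith

lemma Fb_strictMono {a b : ℝ} (ha : 0 < a) (hab : a < b) : Fb a < Fb b := by
  have h1 := Fb_lower ha hab.le
  have h2 : 0 < (b - a) * DD b := mul_pos (by linarith) (DD_pos b)
  linarith

lemma Fb_ratio {a b : ℝ} (ha : 0 < a) (hab : a < b) : Fb b * a ≤ Fb a * b := by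
  have h1 := Fb_upper ha hab.le
  have h2 := u_DD_le_Fb ha
  have h3 : (b - a) * (a * DD a) ≤ (b - a) * Fb a :=
    mul_le_mul_of_nonneg_left h2 (by linarith)
  have h4 := mul_le_mul_of_nonneg_right h1 ha.le
  nlinarith

lemma Fb_key {h u1 u2 : ℝ} (hh : 0 < h) (h1 : h < u1) (h12 : u1 < u2) :
    Fb u2 * (u1 - h) < Fb u1 * (u2 - h) := by
  have hu1 : 0 < u1 := by linarith
  have hA := Fb_ratio hu1 h12
  have hB := Fb_strictMono hu1 h12
  have hC : h * Fb u1 < h * Fb u2 := mul_lt_mul_of_pos_left hB hh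
  nlinarith

/-- For every `t, h > 0` the consistency equation `x = F(t x + h)` has a unique
solution in `(0,1)`. -/
theorem consistency_equation_unique_solution (t h : ℝ) (ht : 0 < t) (hh : 0 < h) :
    ∃! x : ℝ, 0 < x ∧ x < 1 ∧ x = FNL (t * x + h) := by
  have harg : ∀ x : ℝ, 0 ≤ x → 0 < t * x + h := by
    intro x hx
    nlinarith
  -- continuity of x ↦ Fb (t*x+h) - x on [0,1]
  have hcont : ContinuousOn (fun x => Fb (t*x+h) - x) (Icc (0:ℝ) 1) := by
    refine ContinuousOn.sub ?_ continuousOn_id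
    intro x hx
    have hca : ContinuousAt (fun x => Fb (t*x+h)) x := by
      have hFb : ContinuousAt Fb (t*x+h) := (hasDerivAt_Fb (harg x hx.1)).continuousAt
      have hlin : ContinuousAt (fun x : ℝ => t*x+h) x :=
        (((continuous_mul_left t).add continuous_const)).continuousAt
      exact ContinuousAt.comp (g := Fb) (f := fun x : ℝ => t*x+h) (x := x) hFb hlin
    exact hca.continuousWithinAt
  have hF0 : (fun x => Fb (t*x+h) - x) 0 = Fb (t*0+h) := by simp
  have h0pos : 0 < (fun x => Fb (t*x+h) - x) 0 := by
    rw [hF0]; exact Fb_pos (harg 0 le_rfl)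
  have h1neg : (fun x => Fb (t*x+h) - x) 1 < 0 := by
    have hq := harg 1 zero_le_one
    have := FNL_lt_one (t*1+h)
    rw [FNL_eq_Fb hq] at this
    simp only []
    linarith
  have hIVT := intermediate_value_Icc' (by norm_num : (0:ℝ) ≤ 1) hcont
  have h0mem : (0:ℝ) ∈ Icc ((fun x => Fb (t*x+h) - x) 1) ((fun x => Fb (t*x+h) - x) 0) :=
    ⟨h1neg.le, h0pos.le⟩
  obtain ⟨x, hxmem, hfx⟩ := hIVT h0mem
  have hxq := harg x hxmem.1
  have hxeq : x = Fb (t*x+h) := by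
    simp only [] at hfx
    linarith [hfx.le, hfx.ge]
  have hxpos : 0 < x := by rw [hxeq]; exact Fb_pos hxq
  have hxlt1 : x < 1 := by
    have := FNL_lt_one (t*x+h)
    rw [FNL_eq_Fb hxq] at this
    linarith [hxeq]
  -- uniqueness helper
  have huniq : ∀ a b : ℝ, 0 < a → a < b → a = FNL (t*a+h) → b = FNL (t*b+h) → False := by
    intro a b ha hab hfa hfb
    have hb : 0 < b := lt_trans ha hab
    have hu1 : h < t*a+h := by nlinarith
    have hu12 : t*a+h < t*b+h := by nlinarith
    have hfa' : a = Fb (t*a+h) := by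
      rw [FNL_eq_Fb (by linarith : (0:ℝ) < t*a+h)] at hfa; exact hfa
    have hfb' : b = Fb (t*b+h) := by
      rw [FNL_eq_Fb (by linarith : (0:ℝ) < t*b+h)] at hfb; exact hfb
    have hkey := Fb_key hh hu1 hu12
    rw [← hfa', ← hfb'] at hkey
    -- hkey : b * (t*a+h - h) < a * (t*b+h - h)
    have : b * (t*a) < a * (t*b) := by
      have e1 : t*a+h - h = t*a := by ring
      have e2 : t*b+h - h = t*b := by ring
      rw [e1, e2] at hkey
      exact hkey
    nlinarith
  refine ⟨x, ⟨hxpos, hxlt1, by rw [FNL_eq_Fb hxq]; exact hxeq⟩, ?_⟩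
  rintro y ⟨hy0, _, hy⟩
  by_contra hne
  rcases lt_or_gt_of_ne hne with hlt | hgt
  · exact huniq y x hy0 hlt hy (by rw [FNL_eq_Fb hxq]; exact hxeq)
  · exact huniq x y hxpos hgt (by rw [FNL_eq_Fb hxq]; exact hxeq) hy
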